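/- arXiv:1010.5316 — 2 statements merged into one kernel-verified Lean document; each statement's English description precedes it below -/
import Mathlib

section
/- Let A be a semiprime noetherian graded k-subalgebra of the skew polynomial ring D[t;σ]. Then KA = AK (where KA denotes the set of finite sums Σ γ_i a_i with γ_i ∈ K, a_i ∈ A, and AK the set of finite sums Σ a_i γ_i); in particular, KA is a graded k-subalgebra of D[t;σ]. -/
/-- A presentation of the skew polynomial ring `D[t;σ]` over the `k`-algebra `D`:
`S` is a `k`-algebra containing `D` (via the embedding `emb`) together with an
element `t` satisfying `t·γ = σ(γ)·t` for `γ ∈ D`, such that `S` is a free left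
`D`-module with basis `{tⁿ : n ≥ 0}` (every element has a unique representation
`Σ emb γₙ * tⁿ`).  `S` is ℕ-graded with `D` in degree `0` and `deg t = 1`. -/
structure SkewPolyPres (k : Type*) [CommRing k] (D : Type*) [Ring D] [Algebra k D]
    (σ : D ≃ₐ[k] D) (S : Type*) [Ring S] [Algebra k S] where
  emb : D →ₐ[k] S
  t : S
  skew : ∀ γ : D, t * emb γ = emb (σ γ) * t
  repr_exists : ∀ s : S, ∃ f : ℕ →₀ D, s = f.sum fun n γ => emb γ * t ^ n
  repr_unique : ∀ f : ℕ →₀ D, (f.sum fun n γ => emb γ * t ^ n) = 0 → f = 0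

namespace SkewPolyPres

variable {k : Type*} [CommRing k] {D : Type*} [Ring D] [Algebra k D]
    {σ : D ≃ₐ[k] D} {S : Type*} [Ring S] [Algebra k S] (sp : SkewPolyPres k D σ S)

/-- The degree-`n` homogeneous component `D·tⁿ` of `S = D[t;σ]`. -/
def deg (n : ℕ) : Set S := {s | ∃ γ : D, s = sp.emb γ * sp.t ^ n}

/-- A `k`-subalgebra `A` of `S = D[t;σ]` is graded if
`A = ⊕ₙ (A ∩ D·tⁿ)`, i.e. all homogeneous components of elements of `A` lie in `A`. -/
def IsGradedSubalgebra (A : Subalgebra k S) : Prop :=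
  ∀ a ∈ A, ∀ f : ℕ →₀ D, a = (f.sum fun n γ => sp.emb γ * sp.t ^ n) →
    ∀ n, sp.emb (f n) * sp.t ^ n ∈ A

/-- The set `KA` of finite sums `Σ γᵢ·aᵢ` with `γᵢ ∈ K` (the centre of `D`) and
`aᵢ ∈ A`, as an additive submonoid of `S = D[t;σ]`. -/
def KAset (A : Subalgebra k S) : AddSubmonoid S :=
  AddSubmonoid.closure {s : S | ∃ γ ∈ Subring.center D, ∃ a ∈ A, s = sp.emb γ * a}

/-- The set `AK` of finite sums `Σ aᵢ·γᵢ` with `aᵢ ∈ A` and `γᵢ ∈ K` (the centre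
of `D`), as an additive submonoid of `S = D[t;σ]`. -/
def AKset (A : Subalgebra k S) : AddSubmonoid S :=
  AddSubmonoid.closure {s : S | ∃ γ ∈ Subring.center D, ∃ a ∈ A, s = a * sp.emb γ}

end SkewPolyPres

/-- A ring is semiprime if it has no nonzero nilpotent two-sided ideal.
(An ideal `I` is nilpotent if `Iⁿ = 0` for some `n ≥ 1`, i.e. every product of `n`
elements of `I` vanishes.) -/
def IsSemiprimeRing (R : Type*) [Ring R] : Prop :=
  ∀ I : TwoSidedIdeal R,
    (∃ n : ℕ, 0 < n ∧ ∀ f : Fin n → R, (∀ i, f i ∈ I) → (List.ofFn f).prod = 0) →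
    ∀ a ∈ I, a = (0 : R)

namespace SkewPolyPres

variable {k : Type*} [CommRing k] {D : Type*} [Ring D] [Algebra k D]
    {σ : D ≃ₐ[k] D} {S : Type*} [Ring S] [Algebra k S] (sp : SkewPolyPres k D σ S)

/-- The (unique) coefficient finsupp of an element of `S`. -/
noncomputable def coeff (s : S) : ℕ →₀ D := (sp.repr_exists s).choose

lemma coeff_spec (s : S) : s = (sp.coeff s).sum fun n γ => sp.emb γ * sp.t ^ n :=
  (sp.repr_exists s).choose_spec

lemma repr_eq_coeff {s : S} {f : ℕ →₀ D}
    (h : s = f.sum fun n γ => sp.emb γ * sp.t ^ n) : f = sp.coeff s := by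
  have hsub : ((f - sp.coeff s).sum fun n γ => sp.emb γ * sp.t ^ n) = 0 := by
    rw [Finsupp.sum_sub_index (fun n γ₁ γ₂ => by rw [map_sub, sub_mul])]
    rw [← h, ← sp.coeff_spec s, sub_self]
  exact sub_eq_zero.mp (sp.repr_unique _ hsub)

lemma t_pow_mul_emb (n : ℕ) (γ : D) :
    sp.t ^ n * sp.emb γ = sp.emb ((σ ^ n) γ) * sp.t ^ n := by
  induction n with
  | zero => simp
  | succ n ih =>
    calc sp.t ^ (n + 1) * sp.emb γ = sp.t * (sp.t ^ n * sp.emb γ) := by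
          rw [pow_succ', mul_assoc]
      _ = sp.t * sp.emb ((σ ^ n) γ) * sp.t ^ n := by rw [ih, mul_assoc]
      _ = sp.emb (σ ((σ ^ n) γ)) * (sp.t * sp.t ^ n) := by rw [sp.skew, mul_assoc]
      _ = sp.emb ((σ ^ (n + 1)) γ) * sp.t ^ (n + 1) := by
          rw [pow_succ' sp.t, pow_succ' σ, AlgEquiv.mul_apply]

lemma center_map (e : D ≃ₐ[k] D) {γ : D} (h : γ ∈ Subring.center D) :
    e γ ∈ Subring.center D := by
  rw [Subring.mem_center_iff] at h ⊢
  intro d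
  calc d * e γ = e (e.symm d * γ) := by rw [map_mul, e.apply_symm_apply]
    _ = e (γ * e.symm d) := by rw [h (e.symm d)]
    _ = e γ * d := by rw [map_mul, e.apply_symm_apply]

lemma emb_homog_commute (n : ℕ) {γ : D} (δ : D) (hγ : γ ∈ Subring.center D) :
    (sp.emb δ * sp.t ^ n) * sp.emb γ = sp.emb ((σ ^ n) γ) * (sp.emb δ * sp.t ^ n) := by
  have hc := Subring.mem_center_iff.mp (center_map (σ ^ n) hγ) δ
  rw [mul_assoc, sp.t_pow_mul_emb, ← mul_assoc, ← map_mul, hc, map_mul, mul_assoc]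

lemma emb_comm_homog (n : ℕ) {γ : D} (δ : D) (hγ : γ ∈ Subring.center D) :
    sp.emb γ * (sp.emb δ * sp.t ^ n) = (sp.emb δ * sp.t ^ n) * sp.emb ((σ⁻¹ ^ n) γ) := by
  have hγ' : (σ⁻¹ ^ n) γ ∈ Subring.center D := center_map _ hγ
  rw [sp.emb_homog_commute n δ hγ']
  congr 2
  rw [inv_pow, ← AlgEquiv.mul_apply, mul_inv_cancel, AlgEquiv.one_apply]

variable (A : Subalgebra k S)

lemma homog_mem {a : S} (hgraded : sp.IsGradedSubalgebra A) (ha : a ∈ A) (n : ℕ) :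
    sp.emb (sp.coeff a n) * sp.t ^ n ∈ A :=
  hgraded a ha (sp.coeff a) (sp.coeff_spec a) n

lemma KAset_le_AKset (hgraded : sp.IsGradedSubalgebra A) : sp.KAset A ≤ sp.AKset A := by
  rw [KAset, AddSubmonoid.closure_le]
  rintro s ⟨γ, hγ, a, ha, rfl⟩
  have key : sp.emb γ * a
      = (sp.coeff a).sum fun n δ => (sp.emb δ * sp.t ^ n) * sp.emb ((σ⁻¹ ^ n) γ) := by
    conv_lhs => rw [sp.coeff_spec a]
    rw [Finsupp.mul_sum]
    exact Finsupp.sum_congr fun n _ => sp.emb_comm_homog n _ hγ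
  rw [key, Finsupp.sum]
  refine AddSubmonoid.sum_mem _ fun n _ => AddSubmonoid.subset_closure
    ⟨(σ⁻¹ ^ n) γ, center_map _ hγ, sp.emb (sp.coeff a n) * sp.t ^ n,
      sp.homog_mem A hgraded ha n, rfl⟩

lemma AKset_le_KAset (hgraded : sp.IsGradedSubalgebra A) : sp.AKset A ≤ sp.KAset A := by
  rw [AKset, AddSubmonoid.closure_le]
  rintro s ⟨γ, hγ, a, ha, rfl⟩
  have key : a * sp.emb γ
      = (sp.coeff a).sum fun n δ => sp.emb ((σ ^ n) γ) * (sp.emb δ * sp.t ^ n) := by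
    conv_lhs => rw [sp.coeff_spec a]
    rw [Finsupp.sum_mul]
    exact Finsupp.sum_congr fun n _ => sp.emb_homog_commute n _ hγ
  rw [key, Finsupp.sum]
  refine AddSubmonoid.sum_mem _ fun n _ => AddSubmonoid.subset_closure
    ⟨(σ ^ n) γ, center_map _ hγ, sp.emb (sp.coeff a n) * sp.t ^ n,
      sp.homog_mem A hgraded ha n, rfl⟩

lemma gen_mul_gen (hgraded : sp.IsGradedSubalgebra A) {γ δ : D}
    (hγ : γ ∈ Subring.center D) (hδ : δ ∈ Subring.center D)
    {a b : S} (ha : a ∈ A) (hb : b ∈ A) :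
    (sp.emb γ * a) * (sp.emb δ * b) ∈ sp.KAset A := by
  have key : (sp.emb γ * a) * (sp.emb δ * b)
      = (sp.coeff a).sum fun n α =>
          sp.emb (γ * (σ ^ n) δ) * ((sp.emb α * sp.t ^ n) * b) := by
    conv_lhs => rw [sp.coeff_spec a]
    rw [Finsupp.mul_sum, Finsupp.sum_mul]
    refine Finsupp.sum_congr fun n _ => ?_
    calc sp.emb γ * (sp.emb (sp.coeff a n) * sp.t ^ n) * (sp.emb δ * b)
        = sp.emb γ * (((sp.emb (sp.coeff a n) * sp.t ^ n) * sp.emb δ) * b) := by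
          simp only [mul_assoc]
      _ = sp.emb γ * ((sp.emb ((σ ^ n) δ) * (sp.emb (sp.coeff a n) * sp.t ^ n)) * b) := by
          rw [sp.emb_homog_commute n _ hδ]
      _ = sp.emb (γ * (σ ^ n) δ) * ((sp.emb (sp.coeff a n) * sp.t ^ n) * b) := by
          rw [map_mul, mul_assoc, mul_assoc, mul_assoc]
  rw [key, Finsupp.sum]
  refine AddSubmonoid.sum_mem _ fun n _ => AddSubmonoid.subset_closure
    ⟨γ * (σ ^ n) δ, Subring.mul_mem _ hγ (center_map _ hδ),
      (sp.emb (sp.coeff a n) * sp.t ^ n) * b,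
      A.mul_mem (sp.homog_mem A hgraded ha n) hb, rfl⟩

lemma KA_mul_mem (hgraded : sp.IsGradedSubalgebra A) {x y : S}
    (hx : x ∈ sp.KAset A) (hy : y ∈ sp.KAset A) : x * y ∈ sp.KAset A := by
  induction hx using AddSubmonoid.closure_induction with
  | mem x hx =>
    obtain ⟨γ, hγ, a, ha, rfl⟩ := hx
    induction hy using AddSubmonoid.closure_induction with
    | mem y hy =>
      obtain ⟨δ, hδ, b, hb, rfl⟩ := hy
      exact sp.gen_mul_gen A hgraded hγ hδ ha hb
    | zero => rw [mul_zero]; exact zero_mem _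
    | add y z _ _ hy hz => rw [mul_add]; exact add_mem hy hz
  | zero => rw [zero_mul]; exact zero_mem _
  | add x z _ _ hx' hz' => rw [add_mul]; exact add_mem hx' hz'

lemma coeff_zero : sp.coeff (0 : S) = 0 :=
  (sp.repr_eq_coeff (f := 0) (by rw [Finsupp.sum_zero_index])).symm

lemma coeff_add (x y : S) : sp.coeff (x + y) = sp.coeff x + sp.coeff y := by
  refine (sp.repr_eq_coeff ?_).symm
  rw [Finsupp.sum_add_index' (fun n => by rw [map_zero, zero_mul])
    (fun n γ₁ γ₂ => by rw [map_add, add_mul]), ← sp.coeff_spec, ← sp.coeff_spec]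

lemma coeff_gen {γ : D} (a : S) :
    sp.coeff (sp.emb γ * a)
      = (sp.coeff a).mapRange (fun α => γ * α) (mul_zero γ) := by
  refine (sp.repr_eq_coeff ?_).symm
  rw [Finsupp.sum_mapRange_index (fun n => by rw [map_zero, zero_mul])]
  conv_lhs => rw [sp.coeff_spec a]
  rw [Finsupp.mul_sum]
  exact Finsupp.sum_congr fun n _ => by rw [map_mul, mul_assoc]

lemma KA_coeff_mem (hgraded : sp.IsGradedSubalgebra A) {x : S}
    (hx : x ∈ sp.KAset A) (n : ℕ) :
    sp.emb (sp.coeff x n) * sp.t ^ n ∈ sp.KAset A := by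
  induction hx using AddSubmonoid.closure_induction with
  | mem x hx =>
    obtain ⟨γ, hγ, a, ha, rfl⟩ := hx
    rw [sp.coeff_gen, Finsupp.mapRange_apply, map_mul, mul_assoc]
    exact AddSubmonoid.subset_closure
      ⟨γ, hγ, sp.emb (sp.coeff a n) * sp.t ^ n, sp.homog_mem A hgraded ha n, rfl⟩
  | zero =>
    rw [sp.coeff_zero, Finsupp.coe_zero, Pi.zero_apply, map_zero, zero_mul]
    exact zero_mem _
  | add x y _ _ hx' hy' =>
    rw [sp.coeff_add, Finsupp.add_apply, map_add, add_mul]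
    exact add_mem hx' hy'

end SkewPolyPres

/-- Let `k` be an algebraically closed field, `D` a semisimple
`k`-algebra which is finite as a module over its centre `K`, `σ` a `k`-algebra
automorphism of `D`, and `S = D[t;σ]` the skew polynomial ring.  Let `A` be a
semiprime noetherian graded `k`-subalgebra of `D[t;σ]`.  Then `KA = AK` and, in
particular, `KA` is a graded `k`-subalgebra of `D[t;σ]`. -/
theorem KA_eq_AK_and_isGradedSubalgebra
    (k : Type) [Field k] [IsAlgClosed k]
    (D : Type) [Ring D] [Algebra k D] [IsSemisimpleRing D]
    (hDfin : Module.Finite (Subring.center D) D)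
    (σ : D ≃ₐ[k] D)
    (S : Type) [Ring S] [Algebra k S] (sp : SkewPolyPres k D σ S)
    (A : Subalgebra k S)
    (hgraded : sp.IsGradedSubalgebra A)
    (hsemiprime : IsSemiprimeRing ↥A)
    (hnoeth : IsNoetherianRing ↥A) (hnoeth_op : IsNoetherianRing (↥A)ᵐᵒᵖ) :
    sp.KAset A = sp.AKset A ∧
      ∃ B : Subalgebra k S, (B : Set S) = (sp.KAset A : Set S) ∧
        sp.IsGradedSubalgebra B := by
  constructor
  · exact le_antisymm (sp.KAset_le_AKset A hgraded) (sp.AKset_le_KAset A hgraded)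
  · refine ⟨{ carrier := sp.KAset A
              add_mem' := fun h1 h2 => add_mem h1 h2
              zero_mem' := zero_mem _
              mul_mem' := fun h1 h2 => sp.KA_mul_mem A hgraded h1 h2
              one_mem' := AddSubmonoid.subset_closure
                ⟨1, Subring.one_mem _, 1, A.one_mem, by rw [map_one, one_mul]⟩
              algebraMap_mem' := fun c => AddSubmonoid.subset_closure
                ⟨algebraMap k D c,
                  Subring.mem_center_iff.mpr fun g => (Algebra.commutes c g).symm,
                  1, A.one_mem, by rw [mul_one, AlgHom.commutes]⟩ }, rfl, ?_⟩
    intro b hb f hf n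
    rw [sp.repr_eq_coeff hf]
    exact sp.KA_coeff_mem A hgraded hb n
end

section
/- Let Ā be an ℕ-graded σ-twisted K-algebra with bounded Hilbert function, and let x ∈ Ā_d be a regular homogeneous element of degree d > 0. Then there exists N such that for all n ≥ N, left multiplication by x gives a bijection Ā_n → Ā_{n+d}; consequently Ā is a finitely generated left module over its subalgebra K[x;σ^d] (the subalgebra generated by K and x). -/
/-- Let `k` be an algebraically closed field, `K` a commutative
`k`-algebra which is a finite product of fields (i.e. commutative semisimple), and
`σ` a `k`-algebra automorphism of `K`.  Let `Ā` be an ℕ-graded `σ`-twisted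
`K`-algebra (graded by `𝒜`, with `K` embedded in degree `0` via `ι` and
`a·γ = σⁱ(γ)·a` for homogeneous `a` of degree `i`) with bounded Hilbert function:
the lengths of the graded pieces `Ā_n` as left `K`-modules (the left `K`-action
being `γ • a = ι(γ)·a`, with `Ā_n` the `K`-submodule `𝒜K n`) are all finite and
uniformly bounded by some `B`, expressed by saying that every strictly increasing
chain of `K`-submodules contained in `𝒜K n` has at most `B` steps.  Let `x ∈ Ā_d`
be a regular homogeneous element of degree `d > 0`.  Then there exists `N` such
that for all `n ≥ N` left multiplication by `x` is a bijection `Ā_n → Ā_{n+d}`;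
consequently `Ā` is a finitely generated left module over its subalgebra
`K[x;σ^d]` (the `k`-subalgebra generated by `K` and `x`): there is a finite set
`s` such that every element of `Ā` is a finite sum of products `b·v` with `b` in
that subalgebra and `v ∈ s`. -/
theorem mul_left_bijective_of_boundedHilbert_and_finitely_generated
    (k : Type) [Field k] [IsAlgClosed k]
    (K : Type) [CommRing K] [Algebra k K] [IsSemisimpleRing K]
    (σ : K ≃ₐ[k] K)
    (Abar : Type) [Ring Abar] [Algebra k Abar]
    (𝒜 : ℕ → Submodule k Abar) [GradedRing 𝒜]
    (ι : K →ₐ[k] Abar) (hιinj : Function.Injective ι)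
    (hι0 : ∀ γ : K, ι γ ∈ 𝒜 0)
    (htwist : ∀ (i : ℕ), ∀ a ∈ 𝒜 i, ∀ γ : K, a * ι γ = ι ((σ ^ i) γ) * a)
    -- the left `K`-module structure on `Ā` given by `γ • a = ι(γ)·a`,
    -- for which the graded pieces are `K`-submodules
    [Module K Abar] (hsmul : ∀ (γ : K) (a : Abar), γ • a = ι γ * a)
    (𝒜K : ℕ → Submodule K Abar) (h𝒜K : ∀ n, (𝒜K n : Set Abar) = (𝒜 n : Set Abar))
    -- bounded Hilbert function: `length_K (Ā_n) ≤ B` for all `n`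
    (B : ℕ)
    (hHilb : ∀ (n : ℕ)
      (c : RelSeries {(a, b) : Submodule K Abar × Submodule K Abar | a < b}),
      (∀ i, c.toFun i ≤ 𝒜K n) → c.length ≤ B)
    (d : ℕ) (hd : 0 < d) (x : Abar) (hx : x ∈ 𝒜 d)
    (hxreg_l : ∀ b : Abar, x * b = 0 → b = 0)
    (hxreg_r : ∀ b : Abar, b * x = 0 → b = 0) :
    -- for `n` large, left multiplication by `x` is a bijection `Ā_n → Ā_{n+d}`
    (∃ N : ℕ, ∀ n ≥ N,
      (∀ a ∈ 𝒜 n, x * a ∈ 𝒜 (n + d)) ∧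
      (∀ a ∈ 𝒜 n, ∀ a' ∈ 𝒜 n, x * a = x * a' → a = a') ∧
      (∀ b ∈ 𝒜 (n + d), ∃ a ∈ 𝒜 n, b = x * a)) ∧
    -- `Ā` is a finitely generated left module over the subalgebra generated by `K` and `x`
    (∃ s : Finset Abar, ∀ a : Abar,
      a ∈ AddSubmonoid.closure
        {y : Abar | ∃ b ∈ Algebra.adjoin k (Set.range ⇑ι ∪ {x}), ∃ v ∈ s, y = b * v}) := by
  classical
  have hmulmem : ∀ n, ∀ a ∈ 𝒜 n, x * a ∈ 𝒜 (n + d) := by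
    intro n a ha
    have := SetLike.mul_mem_graded hx ha
    rwa [Nat.add_comm d n] at this
  have hmem𝒜K : ∀ (n) (a : Abar), a ∈ 𝒜K n ↔ a ∈ 𝒜 n := by
    intro n a
    constructor <;> intro h
    · have h2 : a ∈ (𝒜K n : Set Abar) := h
      rwa [h𝒜K] at h2
    · show a ∈ (𝒜K n : Set Abar)
      rw [h𝒜K]; exact h
  have hinj : ∀ a a' : Abar, x * a = x * a' → a = a' := by
    intro a a' h
    have h1 : x * (a - a') = 0 := by rw [mul_sub, h, sub_self]
    have := hxreg_l _ h1
    exact sub_eq_zero.mp this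
  have hcomm : ∀ γ : K, ι γ * x = x * ι ((σ ^ d).symm γ) := by
    intro γ
    rw [htwist d x hx ((σ ^ d).symm γ), AlgEquiv.apply_symm_apply]
  set xmap : Submodule K Abar → Submodule K Abar := fun M =>
    { carrier := (fun a => x * a) '' (M : Set Abar)
      add_mem' := by
        rintro a b ⟨a', ha', rfl⟩ ⟨b', hb', rfl⟩
        exact ⟨a' + b', M.add_mem ha' hb', by exact mul_add x a' b'⟩
      zero_mem' := ⟨0, M.zero_mem, mul_zero x⟩
      smul_mem' := by
        rintro c a ⟨a', ha', rfl⟩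
        refine ⟨((σ ^ d).symm c) • a', M.smul_mem _ ha', ?_⟩
        show x * ((σ ^ d).symm c • a') = c • (x * a')
        rw [hsmul ((σ ^ d).symm c) a', hsmul c (x * a'), ← mul_assoc, ← hcomm, mul_assoc] }
    with hxmap
  have xmap_mem : ∀ (M) (y : Abar), y ∈ xmap M ↔ ∃ a ∈ M, x * a = y := by
    intro M y
    constructor
    · rintro ⟨a, ha, rfl⟩; exact ⟨a, ha, rfl⟩
    · rintro ⟨a, ha, rfl⟩; exact ⟨a, ha, rfl⟩
  have xmap_mono : ∀ {M M' : Submodule K Abar}, M ≤ M' → xmap M ≤ xmap M' := by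
    intro M M' h y hy
    obtain ⟨a, ha, rfl⟩ := (xmap_mem M y).mp hy
    exact (xmap_mem M' _).mpr ⟨a, h ha, rfl⟩
  have xmap_rev : ∀ {M M' : Submodule K Abar}, xmap M ≤ xmap M' → M ≤ M' := by
    intro M M' h a ha
    obtain ⟨b, hb, hba⟩ := (xmap_mem M' (x * a)).mp (h ((xmap_mem M (x * a)).mpr ⟨a, ha, rfl⟩))
    exact (hinj b a hba) ▸ hb
  have xmap_lt : ∀ {M M' : Submodule K Abar}, M < M' → xmap M < xmap M' :=
    fun h => lt_iff_le_not_ge.mpr ⟨xmap_mono h.le, fun hle => h.not_ge (xmap_rev hle)⟩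
  have xmap_sub : ∀ n, xmap (𝒜K n) ≤ 𝒜K (n + d) := by
    intro n y hy
    obtain ⟨a, ha, rfl⟩ := (xmap_mem _ y).mp hy
    exact (hmem𝒜K _ _).mpr (hmulmem n a ((hmem𝒜K n a).mp ha))
  -- chain length function
  set LS : ℕ → Set ℕ := fun n =>
    {m | ∃ c : RelSeries {(a, b) : Submodule K Abar × Submodule K Abar | a < b},
      (∀ i, c.toFun i ≤ 𝒜K n) ∧ c.length = m} with hLS
  set L : ℕ → ℕ := fun n => sSup (LS n) with hL
  have hLS0 : ∀ n, 0 ∈ LS n := fun n =>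
    ⟨RelSeries.singleton _ ⊥, fun _ => bot_le, rfl⟩
  have hLSbdd : ∀ n, ∀ m ∈ LS n, m ≤ B := by
    rintro n m ⟨c, hc, rfl⟩; exact hHilb n c hc
  have hLmem : ∀ n, L n ∈ LS n := fun n =>
    Nat.sSup_mem ⟨0, hLS0 n⟩ ⟨B, fun m hm => hLSbdd n m hm⟩
  have hLle : ∀ n, ∀ m ∈ LS n, m ≤ L n := fun n m hm =>
    le_csSup ⟨B, fun m' hm' => hLSbdd n m' hm'⟩ hm
  have hLmono : ∀ n, L n ≤ L (n + d) := by
    intro n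
    obtain ⟨c, hc, hlen⟩ := hLmem n
    exact hlen ▸ hLle (n + d) c.length
      ⟨⟨c.length, fun i => xmap (c.toFun i), fun i => xmap_lt (c.step i)⟩,
        fun i => le_trans (xmap_mono (hc i)) (xmap_sub n), rfl⟩
  have key : ∀ n, xmap (𝒜K n) = 𝒜K (n + d) ∨ L n + 1 ≤ L (n + d) := by
    intro n
    rcases eq_or_lt_of_le (xmap_sub n) with h | h
    · exact Or.inl h
    · right
      obtain ⟨c, hc, hlen⟩ := hLmem n
      set c' : RelSeries {(a, b) : Submodule K Abar × Submodule K Abar | a < b} :=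
        ⟨c.length, fun i => xmap (c.toFun i), fun i => xmap_lt (c.step i)⟩ with hc'
      have hlast : c'.last < 𝒜K (n + d) :=
        lt_of_le_of_lt (xmap_mono (hc (Fin.last c.length))) h
      refine hLle (n + d) (L n + 1)
        ⟨c'.snoc (𝒜K (n + d)) hlast, ?_, ?_⟩
      · intro i
        refine Fin.lastCases ?_ ?_ i
        · show (c'.snoc (𝒜K (n + d)) hlast).last ≤ 𝒜K (n + d)
          rw [RelSeries.last_snoc]
        · intro j
          show c'.snoc (𝒜K (n + d)) hlast (Fin.castSucc j) ≤ 𝒜K (n + d)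
          refine (RelSeries.snoc_castSucc c' _ hlast j).trans_le ?_
          exact le_trans (xmap_mono (hc j)) (xmap_sub n)
      · show c.length + 1 = L n + 1
        rw [hlen]
  have hLB : ∀ n, L n ≤ B := fun n => hLSbdd n (L n) (hLmem n)
  have hmonoJ : ∀ r, Monotone (fun j => L (r + j * d)) := by
    intro r
    apply monotone_nat_of_le_succ
    intro j
    have h1 := hLmono (r + j * d)
    have h2 : r + j * d + d = r + (j + 1) * d := by ring
    rwa [h2] at h1
  have hstab : ∀ r, ∃ jr, ∀ j, jr ≤ j → L (r + j * d) = L (r + jr * d) := by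
    intro r
    have hfin : BddAbove (Set.range fun j => L (r + j * d)) :=
      ⟨B, by rintro m ⟨j, rfl⟩; exact hLB _⟩
    obtain ⟨jr, hjr⟩ := Nat.sSup_mem (Set.range_nonempty _) hfin
    have hjr' : L (r + jr * d) = sSup (Set.range fun j => L (r + j * d)) := hjr
    refine ⟨jr, fun j hj => le_antisymm ?_ (hmonoJ r hj)⟩
    rw [hjr']
    exact le_csSup hfin ⟨j, rfl⟩
  choose jr hjr using hstab
  set N := Finset.sup (Finset.range d) (fun r => r + jr r * d) with hNdef
  have hNsurj : ∀ n, N ≤ n → xmap (𝒜K n) = 𝒜K (n + d) := by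
    intro n hn
    rcases key n with h | h
    · exact h
    · exfalso
      set r := n % d with hr
      have hrd : r < d := Nat.mod_lt _ hd
      have h1 : r + (n / d) * d = n := by
        rw [mul_comm]; exact Nat.mod_add_div n d
      have h2 : r + jr r * d ≤ N := by
        rw [hNdef]
        exact Finset.le_sup (f := fun r => r + jr r * d) (Finset.mem_range.mpr hrd)
      have h3 : jr r ≤ n / d := by
        have h5 : jr r * d ≤ (n / d) * d := by omega
        exact Nat.le_of_mul_le_mul_right h5 hd
      have e1 : L n = L (r + jr r * d) := by
        conv_lhs => rw [← h1]
        exact hjr r (n / d) h3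
      have e2 : L (n + d) = L (r + jr r * d) := by
        have h4 : n + d = r + (n / d + 1) * d := by
          rw [add_mul, one_mul, ← add_assoc, h1]
        rw [h4]
        exact hjr r (n / d + 1) (le_trans h3 (Nat.le_succ _))
      rw [e2, e1] at h
      omega
  have hsurj : ∀ n, N ≤ n → ∀ b ∈ 𝒜 (n + d), ∃ a ∈ 𝒜 n, b = x * a := by
    intro n hn b hb
    have hb' : b ∈ xmap (𝒜K n) := by
      rw [hNsurj n hn]; exact (hmem𝒜K _ _).mpr hb
    obtain ⟨a, ha, rfl⟩ := (xmap_mem _ _).mp hb'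
    exact ⟨a, (hmem𝒜K _ _).mp ha, rfl⟩
  refine ⟨⟨N, fun n hn => ⟨hmulmem n, fun a _ a' _ h => hinj a a' h, hsurj n hn⟩⟩, ?_⟩
  -- finite generation of each graded piece as a K-module
  have hfg : ∀ n, ∃ t : Finset Abar,
      ↑t ⊆ (𝒜K n : Set Abar) ∧ 𝒜K n ≤ Submodule.span K (↑t : Set Abar) := by
    intro n
    by_contra hcon
    push_neg at hcon
    have step : ∀ j : ℕ, ∃ c : RelSeries {(a, b) : Submodule K Abar × Submodule K Abar | a < b},
        c.length = j ∧ (∀ i, c.toFun i ≤ 𝒜K n) ∧ ∃ t : Finset Abar,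
          ↑t ⊆ (𝒜K n : Set Abar) ∧ c.last = Submodule.span K (↑t : Set Abar) := by
      intro j
      induction j with
      | zero =>
        refine ⟨RelSeries.singleton _ ⊥, rfl, fun _ => bot_le, ∅, by simp, ?_⟩
        rw [RelSeries.last_singleton]
        simp
      | succ j ih =>
        obtain ⟨c, hlen, hle, t, ht, hlast⟩ := ih
        have h1 : ¬ 𝒜K n ≤ Submodule.span K (↑t : Set Abar) := hcon t ht
        obtain ⟨a, ha, hna⟩ := SetLike.not_le_iff_exists.mp h1
        have htins : (↑(insert a t) : Set Abar) ⊆ (𝒜K n : Set Abar) := by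
          rw [Finset.coe_insert]
          exact Set.insert_subset ha ht
        have hlt : c.last < Submodule.span K (↑(insert a t) : Set Abar) := by
          rw [hlast]
          refine lt_of_le_of_ne (Submodule.span_mono ?_) fun e => hna ?_
          · rw [Finset.coe_insert]; exact Set.subset_insert _ _
          · rw [e]
            exact Submodule.subset_span (by rw [Finset.coe_insert]; exact Set.mem_insert _ _)
        refine ⟨c.snoc _ hlt, ?_, ?_, insert a t, htins, ?_⟩
        · show c.length + 1 = j + 1
          rw [hlen]
        · intro i
          refine Fin.lastCases ?_ ?_ i
          · show (c.snoc _ hlt).last ≤ 𝒜K n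
            rw [RelSeries.last_snoc]
            exact Submodule.span_le.mpr htins
          · intro i
            show (c.snoc _ hlt) (Fin.castSucc i) ≤ 𝒜K n
            refine (RelSeries.snoc_castSucc c _ hlt i).trans_le ?_
            exact hle i
        · rw [RelSeries.last_snoc]
    obtain ⟨c, hlen, hle, -⟩ := step (B + 1)
    have := hHilb n c hle
    omega
  choose t ht hspan using hfg
  refine ⟨(Finset.range (N + d)).biUnion t, ?_⟩
  intro a
  set s : Finset Abar := (Finset.range (N + d)).biUnion t with hs
  set C : AddSubmonoid Abar := AddSubmonoid.closure
    {y : Abar | ∃ b ∈ Algebra.adjoin k (Set.range ⇑ι ∪ {x}), ∃ v ∈ s, y = b * v} with hC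
  have hxadj : x ∈ Algebra.adjoin k (Set.range ⇑ι ∪ {x}) :=
    Algebra.subset_adjoin (Set.mem_union_right _ rfl)
  have hιadj : ∀ γ : K, ι γ ∈ Algebra.adjoin k (Set.range ⇑ι ∪ {x}) :=
    fun γ => Algebra.subset_adjoin (Set.mem_union_left _ ⟨γ, rfl⟩)
  have hxC : ∀ y ∈ C, x * y ∈ C := by
    intro y hy
    induction hy using AddSubmonoid.closure_induction with
    | mem z hz =>
      obtain ⟨b, hb, v, hv, rfl⟩ := hz
      exact AddSubmonoid.subset_closure ⟨x * b, mul_mem hxadj hb, v, hv, (mul_assoc x b v).symm⟩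
    | zero => rw [mul_zero]; exact zero_mem C
    | add z w hz hw ihz ihw => rw [mul_add]; exact add_mem ihz ihw
  have hsmulC : ∀ (γ : K), ∀ y ∈ C, γ • y ∈ C := by
    intro γ y hy
    induction hy using AddSubmonoid.closure_induction with
    | mem z hz =>
      obtain ⟨b, hb, v, hv, rfl⟩ := hz
      rw [hsmul, ← mul_assoc]
      exact AddSubmonoid.subset_closure ⟨ι γ * b, mul_mem (hιadj γ) hb, v, hv, rfl⟩
    | zero => rw [smul_zero]; exact zero_mem C
    | add z w hz hw ihz ihw => rw [smul_add]; exact add_mem ihz ihw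
  have hhom : ∀ n, ∀ a ∈ 𝒜 n, a ∈ C := by
    intro n
    induction n using Nat.strong_induction_on with
    | _ n ih =>
      intro a ha
      by_cases hn : n < N + d
      · have ha' : a ∈ Submodule.span K (↑(t n) : Set Abar) :=
          hspan n ((hmem𝒜K n a).mpr ha)
        clear ha
        induction ha' using Submodule.span_induction with
        | mem v hv =>
          have hvs : v ∈ s := Finset.mem_biUnion.mpr ⟨n, Finset.mem_range.mpr hn, hv⟩
          exact AddSubmonoid.subset_closure ⟨1, one_mem _, v, hvs, (one_mul v).symm⟩
        | zero => exact zero_mem C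
        | add z w hz hw ihz ihw => exact add_mem ihz ihw
        | smul γ z hz ihz => exact hsmulC γ z ihz
      · push_neg at hn
        have h1 : N ≤ n - d := by omega
        have h2 : (n - d) + d = n := by omega
        obtain ⟨a', ha', rfl⟩ := hsurj (n - d) h1 a (by rw [h2]; exact ha)
        exact hxC _ (ih (n - d) (by omega) a' ha')
  have hdec := DirectSum.sum_support_decompose 𝒜 a
  rw [← hdec]
  exact AddSubmonoid.sum_mem C fun i _ => hhom i _ (SetLike.coe_mem _)
end
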